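/- Suppose in a z-ary fat-tree each core switch with index j (0 ≤ j ≤ z²/4 − 1) is reachable from pod p only through the aggregation switch in position ⌊j/(z/2)⌋ of pod p. Then any inter-pod flow routed through core switch j must traverse the aggregation switches in position ⌊j/(z/2)⌋ in both its source pod and destination pod; consequently, the set of flows that can be carried by the cores in a fixed congruence class {j : ⌊j/(z/2)⌋ = q} is determined independently of other congruence classes, and the minimum number of active core nodes decomposes as the sum over congruence classes of independent vector bin packing optima. -/
import Mathlib

open Finset

private lemma card_decomp {h M : ℕ} (cls : Fin M → Fin h)
    (c : Fin M → Fin h × Fin h) (hc : ∀ m, (c m).1 = cls m) :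
    (Finset.image c Finset.univ).card
      = ∑ q : Fin h,
          (Finset.image (fun m => (c m).2)
            (Finset.univ.filter (fun m => cls m = q))).card := by
  classical
  have hsplit : Finset.image c Finset.univ
      = Finset.univ.biUnion
          (fun q : Fin h => Finset.image c (Finset.univ.filter (fun m => cls m = q))) := by
    ext x
    simp only [Finset.mem_image, Finset.mem_biUnion, Finset.mem_filter, Finset.mem_univ,
      true_and]
    constructor
    · rintro ⟨m, rfl⟩; exact ⟨cls m, m, rfl, rfl⟩
    · rintro ⟨q, m, _, rfl⟩; exact ⟨m, rfl⟩
  rw [hsplit, Finset.card_biUnion]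
  · refine Finset.sum_congr rfl fun q _ => ?_
    have hinj : Set.InjOn Prod.snd
        (Finset.image c (Finset.univ.filter (fun m => cls m = q)) : Set (Fin h × Fin h)) := by
      intro x hx y hy hxy
      simp only [Finset.coe_image, Set.mem_image, Finset.mem_coe, Finset.mem_filter,
        Finset.mem_univ, true_and] at hx hy
      obtain ⟨mx, hmx, rfl⟩ := hx
      obtain ⟨my, hmy, rfl⟩ := hy
      exact Prod.ext (((hc mx).trans hmx).trans (((hc my).trans hmy).symm)) hxy
    rw [← Finset.card_image_of_injOn hinj, Finset.image_image]
    rfl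
  · intro q _ q' _ hqq'
    simp only [Finset.disjoint_left, Finset.mem_image, Finset.mem_filter, Finset.mem_univ,
      true_and]
    rintro x ⟨m, hm, rfl⟩ ⟨m', hm', heq⟩
    apply hqq'
    rw [← (hc m).trans hm, ← heq, (hc m').trans hm']

/-- Layer-wise decomposition for cores of a fat-tree.  Cores are indexed by pairs
`(q, r) : Fin h × Fin h` (`h = z/2`), where `q` is the congruence class (aggregation
position) of the core.  Since a flow can only reach cores through the aggregation
switch in its class, a feasible routing must send each flow `m` to a core of class
`cls m`; the classes are therefore independent, and the minimum number of active core
nodes equals the sum over congruence classes of the optima of independent vector bin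
packing instances (with `h` bins each) on the flows of that class. -/
theorem core_layer_decomposition (h M K : ℕ) (hpos : 0 < h)
    (R : Fin M → Fin K → ℝ) (hR : ∀ m k, 0 ≤ R m k ∧ R m k ≤ 1)
    (cls : Fin M → Fin h)
    (hfeas : ∃ c : Fin M → Fin h × Fin h,
      (∀ m, (c m).1 = cls m) ∧
      (∀ core : Fin h × Fin h, ∀ k : Fin K,
        ∑ m ∈ Finset.univ.filter (fun m => c m = core), R m k ≤ 1)) :
    sInf {a : ℕ | ∃ c : Fin M → Fin h × Fin h,
        (∀ m, (c m).1 = cls m) ∧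
        (∀ core : Fin h × Fin h, ∀ k : Fin K,
          ∑ m ∈ Finset.univ.filter (fun m => c m = core), R m k ≤ 1) ∧
        a = (Finset.image c Finset.univ).card}
      = ∑ q : Fin h,
        sInf {b : ℕ | ∃ g : Fin M → Fin h,
          (∀ r : Fin h, ∀ k : Fin K,
            ∑ m ∈ Finset.univ.filter (fun m => cls m = q ∧ g m = r), R m k ≤ 1) ∧
          b = (Finset.image g (Finset.univ.filter (fun m => cls m = q))).card} := by
  classical
  obtain ⟨c₀, hc₀1, hc₀2⟩ := hfeas
  have hfe : ∀ (c : Fin M → Fin h × Fin h), (∀ m, (c m).1 = cls m) →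
      ∀ q r, Finset.univ.filter (fun m => c m = (q, r))
        = Finset.univ.filter (fun m => cls m = q ∧ (c m).2 = r) := by
    intro c hc q r
    apply Finset.filter_congr
    intro m _
    rw [Prod.ext_iff, hc m]
  have hBne : ∀ q : Fin h, ({b : ℕ | ∃ g : Fin M → Fin h,
      (∀ r : Fin h, ∀ k : Fin K,
        ∑ m ∈ Finset.univ.filter (fun m => cls m = q ∧ g m = r), R m k ≤ 1) ∧
      b = (Finset.image g (Finset.univ.filter (fun m => cls m = q))).card}).Nonempty := by
    intro q
    refine ⟨_, fun m => (c₀ m).2, fun r k => ?_, rfl⟩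
    rw [← hfe c₀ hc₀1 q r]
    exact hc₀2 (q, r) k
  apply le_antisymm
  · have hmem := fun q => Nat.sInf_mem (hBne q)
    choose g hg1 hg2 using hmem
    set c : Fin M → Fin h × Fin h := fun m => (cls m, g (cls m) m) with hc_def
    have hc1 : ∀ m, (c m).1 = cls m := fun m => rfl
    refine Nat.sInf_le ⟨c, hc1, ?_, ?_⟩
    · rintro ⟨q, r⟩ k
      rw [hfe c hc1 q r]
      have : Finset.univ.filter (fun m => cls m = q ∧ (c m).2 = r)
          = Finset.univ.filter (fun m => cls m = q ∧ g q m = r) := by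
        apply Finset.filter_congr
        intro m _
        constructor <;> rintro ⟨h1, h2⟩ <;> subst h1 <;> exact ⟨rfl, h2⟩
      rw [this]
      exact hg1 q r k
    · rw [card_decomp cls c hc1]
      refine Finset.sum_congr rfl fun q _ => ?_
      rw [hg2 q]
      congr 1
      apply Finset.image_congr
      intro m hm
      simp only [Finset.coe_filter, Set.mem_setOf_eq, Finset.mem_univ, true_and] at hm
      simp [hc_def, hm]
  · have hAne : ({a : ℕ | ∃ c : Fin M → Fin h × Fin h,
        (∀ m, (c m).1 = cls m) ∧
        (∀ core : Fin h × Fin h, ∀ k : Fin K,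
          ∑ m ∈ Finset.univ.filter (fun m => c m = core), R m k ≤ 1) ∧
        a = (Finset.image c Finset.univ).card}).Nonempty :=
      ⟨_, c₀, hc₀1, hc₀2, rfl⟩
    obtain ⟨c, hc1, hc2, hca⟩ := Nat.sInf_mem hAne
    rw [hca, card_decomp cls c hc1]
    refine Finset.sum_le_sum fun q _ => ?_
    refine Nat.sInf_le ⟨fun m => (c m).2, fun r k => ?_, rfl⟩
    rw [← hfe c hc1 q r]
    exact hc2 (q, r) k
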